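/- With the fixed-s orthogonal family setup, for every n ≥ 1 one has ∮_{|z|=1} z² · p_n′(z) · p_n(1/z) dμ = ( n·(b_{n−1} − b_n) − b_{n−1} ) · h_n, where b_{n−1} is the coefficient of z^{n−1} in p_n and b_n is the coefficient of z^n in p_{n+1}, and p_n′ denotes the derivative of p_n. -/

import Mathlib

open Polynomial

/-- Lemma 4: `∮ z²·p_n′(z)·p_n(1/z) dμ = (n(b_{n−1} − b_n) − b_{n−1})·h_n` for `n ≥ 1`,
where `b_{n−1}` is the coefficient of `z^{n−1}` in `p_n` and `b_n` that of `z^n` in `p_{n+1}`. -/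
theorem stmt_6 (s : ℝ) (hs : 0 < s)
    (p : ℕ → Polynomial ℂ)
    (hmonic : ∀ n, (p n).Monic)
    (hdeg : ∀ n, (p n).natDegree = n)
    (hreal : ∀ n k, ((p n).coeff k).im = 0)
    (hp0 : ∀ n, (p n).coeff 0 ≠ 0)
    (horth : ∀ n m, n ≠ m →
      (∮ z in C(0, 1), (p n).eval z * (p m).eval z⁻¹ *
        Complex.exp (s * (z + z⁻¹)) / z) = 0)
    (h : ℕ → ℂ)
    (hh : ∀ n, h n = ∮ z in C(0, 1), (p n).eval z * (p n).eval z⁻¹ *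
        Complex.exp (s * (z + z⁻¹)) / z)
    (hne : ∀ n, h n ≠ 0)
    (n : ℕ) (hn : 1 ≤ n) :
    (∮ z in C(0, 1), z ^ 2 * ((Polynomial.derivative (p n)).eval z) * (p n).eval z⁻¹ *
        Complex.exp (s * (z + z⁻¹)) / z) =
      ((n : ℂ) * ((p n).coeff (n - 1) - (p (n + 1)).coeff n) - (p n).coeff (n - 1)) * h n := by
  classical
  set I : Polynomial ℂ → ℂ := fun q => ∮ z in C(0, 1), q.eval z * (p n).eval z⁻¹ *
      Complex.exp (s * (z + z⁻¹)) / z with hIdef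
  have hz0 : ∀ z ∈ Metric.sphere (0:ℂ) 1, z ≠ 0 := by
    intro z hz h0; simp [h0] at hz
  have CI : ∀ q : Polynomial ℂ, CircleIntegrable (fun z => q.eval z * (p n).eval z⁻¹ *
      Complex.exp (s * (z + z⁻¹)) / z) 0 1 := by
    intro q
    apply ContinuousOn.circleIntegrable zero_le_one
    apply ContinuousOn.div _ continuousOn_id hz0
    exact ((q.continuous_aeval.continuousOn.mul
        (((p n).continuous_aeval).comp_continuousOn (continuousOn_id.inv₀ hz0))).mul
      (Complex.continuous_exp.comp_continuousOn
        (continuousOn_const.mul (continuousOn_id.add (continuousOn_id.inv₀ hz0)))))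
  have Isub : ∀ q r : Polynomial ℂ, I (q - r) = I q - I r := by
    intro q r
    simp only [hIdef]
    rw [← circleIntegral.integral_sub (CI q) (CI r)]
    refine circleIntegral.integral_congr zero_le_one fun z _ => ?_
    simp only [eval_sub]
    ring
  have Ismul : ∀ (a : ℂ) (q : Polynomial ℂ), I (a • q) = a * I q := by
    intro a q
    simp only [hIdef]
    rw [← smul_eq_mul, ← circleIntegral.integral_smul]
    refine circleIntegral.integral_congr zero_le_one fun z _ => ?_
    simp only [eval_smul, smul_eq_mul]
    ring
  have Iorth : ∀ m, m ≠ n → I (p m) = 0 := fun m hm => horth m n hm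
  have Ipn : I (p n) = h n := (hh n).symm
  -- key : integral of low-degree polynomials vanishes
  have key : ∀ d : ℕ, ∀ q : Polynomial ℂ, q.natDegree ≤ d → q.degree < (n : WithBot ℕ) →
      I q = 0 := by
    intro d
    induction d with
    | zero =>
      intro q hq _
      have hp0' : p 0 = 1 := ((hmonic 0).natDegree_eq_zero).mp (hdeg 0)
      have : q = q.coeff 0 • p 0 := by
        rw [hp0', smul_eq_C_mul, mul_one]
        exact Polynomial.eq_C_of_natDegree_le_zero hq
      rw [this, Ismul, Iorth 0 (by omega), mul_zero]
    | succ d ih =>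
      intro q hq hqn
      by_cases hq0 : q = 0
      · subst hq0
        have : (0 : Polynomial ℂ) = 0 - 0 := by ring
        rw [this, Isub, sub_self]
      by_cases hqd : q.natDegree ≤ d
      · exact ih q hqd hqn
      set m := q.natDegree with hm
      have hmn : m < n := by
        have := Polynomial.degree_eq_natDegree hq0
        rw [this] at hqn
        exact_mod_cast hqn
      have hlc0 : q.leadingCoeff ≠ 0 := Polynomial.leadingCoeff_ne_zero.mpr hq0
      have hdegm : (q.leadingCoeff • p m).degree = q.degree := by
        rw [smul_eq_C_mul, Polynomial.degree_C_mul hlc0,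
          Polynomial.degree_eq_natDegree hq0,
          Polynomial.degree_eq_natDegree (hmonic m).ne_zero, hdeg m]
      have hlc : (q.leadingCoeff • p m).leadingCoeff = q.leadingCoeff := by
        rw [smul_eq_C_mul, Polynomial.leadingCoeff_mul, Polynomial.leadingCoeff_C,
          (hmonic m).leadingCoeff, mul_one]
      have hsub : (q - q.leadingCoeff • p m).degree < q.degree :=
        Polynomial.degree_sub_lt hdegm.symm hq0 hlc.symm
      have hnd : (q - q.leadingCoeff • p m).natDegree ≤ d := by
        by_cases h0 : q - q.leadingCoeff • p m = 0
        · simp [h0]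
        have := Polynomial.natDegree_lt_natDegree h0 hsub
        omega
      have hrd : (q - q.leadingCoeff • p m).degree < (n : WithBot ℕ) := lt_trans hsub hqn
      have h1 : I (q - q.leadingCoeff • p m) = 0 := ih _ hnd hrd
      have h2 : I (q.leadingCoeff • p m) = 0 := by
        rw [Ismul, Iorth m (by omega), mul_zero]
      have h3 := Isub q (q.leadingCoeff • p m)
      rw [h1, h2, sub_zero] at h3
      exact h3.symm
  -- the decomposition
  set b : ℂ := (p n).coeff (n - 1) with hb
  set b' : ℂ := (p (n + 1)).coeff n with hb'
  set c : ℂ := (n : ℂ) * (b - b') - b with hc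
  set q : Polynomial ℂ := X ^ 2 * Polynomial.derivative (p n) with hq
  set r : Polynomial ℂ := q - (n : ℂ) • p (n + 1) - c • p n with hr
  -- coefficients of q
  have hqc : ∀ m : ℕ, q.coeff m = if 2 ≤ m then (Polynomial.derivative (p n)).coeff (m - 2)
      else 0 := fun m => Polynomial.coeff_X_pow_mul' _ 2 m
  have hdnd : (Polynomial.derivative (p n)).natDegree ≤ n - 1 := by
    have := Polynomial.natDegree_derivative_le (p n)
    rwa [hdeg n] at this
  -- r has degree < n
  have hrdeg : r.degree < (n : WithBot ℕ) := by
    rw [Polynomial.degree_lt_iff_coeff_zero]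
    intro m hm
    simp only [hr, Polynomial.coeff_sub, Polynomial.coeff_smul, smul_eq_mul]
    rcases eq_or_lt_of_le hm with hmn | hmn
    · -- m = n
      subst hmn
      have h1 : q.coeff n = ((n : ℂ) - 1) * b := by
        rw [hqc n]
        rcases Nat.lt_or_ge n 2 with h2 | h2
        · have hn1 : n = 1 := by omega
          subst hn1
          rw [if_neg (by omega), hb]
          norm_num
        · rw [if_pos h2, Polynomial.coeff_derivative, hb]
          have e1 : n - 2 + 1 = n - 1 := by omega
          rw [e1]
          have e2 : ((n - 2 : ℕ) : ℂ) + 1 = (n : ℂ) - 1 := by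
            push_cast [Nat.cast_sub h2]
            ring
          rw [e2, mul_comm]
      have h2 : (p (n + 1)).coeff n = b' := hb'.symm
      have h3 : (p n).coeff n = 1 := by
        have := (hmonic n).coeff_natDegree
        rwa [hdeg n] at this
      rw [h1, h2, h3, hc, hb]
      ring
    · rcases eq_or_lt_of_le (Nat.succ_le_of_lt hmn : n + 1 ≤ m) with hmn1 | hmn1
      · -- m = n + 1
        have hm1 : m = n + 1 := hmn1.symm
        subst hm1
        have h1 : q.coeff (n + 1) = (n : ℂ) := by
          rw [hqc, if_pos (by omega)]
          have e1 : n + 1 - 2 = n - 1 := by omega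
          rw [e1, Polynomial.coeff_derivative]
          have e2 : n - 1 + 1 = n := by omega
          rw [e2]
          have h3 : (p n).coeff n = 1 := by
            have := (hmonic n).coeff_natDegree
            rwa [hdeg n] at this
          rw [h3, one_mul]
          push_cast [Nat.cast_sub hn]
          ring
        have h2 : (p (n + 1)).coeff (n + 1) = 1 := by
          have := (hmonic (n + 1)).coeff_natDegree
          rwa [hdeg (n + 1)] at this
        have h3 : (p n).coeff (n + 1) = 0 :=
          Polynomial.coeff_eq_zero_of_natDegree_lt (by rw [hdeg n]; omega)
        rw [h1, h2, h3]
        ring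
      · -- m ≥ n + 2
        have h1 : q.coeff m = 0 := by
          rw [hqc, if_pos (by omega)]
          exact Polynomial.coeff_eq_zero_of_natDegree_lt (by omega)
        have h2 : (p (n + 1)).coeff m = 0 :=
          Polynomial.coeff_eq_zero_of_natDegree_lt (by rw [hdeg (n + 1)]; omega)
        have h3 : (p n).coeff m = 0 :=
          Polynomial.coeff_eq_zero_of_natDegree_lt (by rw [hdeg n]; omega)
        rw [h1, h2, h3]
        ring
  have hIr : I r = 0 := key r.natDegree r le_rfl hrdeg
  have hsplit := Isub (q - (n : ℂ) • p (n + 1)) (c • p n)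
  rw [← hr, hIr, Isub q ((n : ℂ) • p (n + 1)), Ismul, Ismul, Iorth (n + 1) (by omega), Ipn,
    mul_zero, sub_zero] at hsplit
  -- hsplit : 0 = I q - c * h n
  have hgoal : (∮ z in C(0, 1), z ^ 2 * ((Polynomial.derivative (p n)).eval z)
      * (p n).eval z⁻¹ * Complex.exp (s * (z + z⁻¹)) / z) = I q := by
    refine circleIntegral.integral_congr zero_le_one fun z _ => ?_
    simp [hq, Polynomial.eval_mul, Polynomial.eval_pow]
  rw [hgoal]
  rw [hc]
  linear_combination -hsplit
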